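/- Let G be a tree on the vertex set {1, …, d}, fix a vertex k, let (W_e)_{e ∈ E(G)} be mutually independent real-valued random variables indexed by the edges of G, and let E be a standard exponential random variable (rate 1) independent of (W_e)_{e ∈ E(G)}. Define the d-dimensional random vector Y by Y_i = E + ∑_{e ∈ ph(ik)} W_e, where ph(ik) denotes the edge set of the unique path in G between i and k (so Y_k = E). Then Y is positively associated. -/

import Mathlib

open MeasureTheory

section Cov

variable {α : Type*} [MeasurableSpace α]

/-- Bounded measurable monotone functions have nonnegative covariance under `Q`. -/
def CovNonneg [Preorder α] (Q : Measure α) : Prop :=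
  ∀ f g : α → ℝ, Measurable f → Measurable g →
    (∃ C, ∀ x, |f x| ≤ C) → (∃ C, ∀ x, |g x| ≤ C) →
    Monotone f → Monotone g →
    (∫ x, f x ∂Q) * (∫ x, g x ∂Q) ≤ ∫ x, f x * g x ∂Q

lemma integrable_of_bdd {Q : Measure α} [IsFiniteMeasure Q] {f : α → ℝ}
    (hf : Measurable f) {C : ℝ} (hC : ∀ x, |f x| ≤ C) : Integrable f Q := by
  refine Integrable.mono' (integrable_const C) hf.aestronglyMeasurable ?_
  exact Filter.Eventually.of_forall fun x => by simpa [Real.norm_eq_abs] using hC x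

lemma integrable_mul_of_bdd {Q : Measure α} [IsFiniteMeasure Q] {f g : α → ℝ}
    (hf : Measurable f) (hg : Measurable g) {Cf Cg : ℝ}
    (hCf : ∀ x, |f x| ≤ Cf) (hCg : ∀ x, |g x| ≤ Cg) :
    Integrable (fun x => f x * g x) Q := by
  refine integrable_of_bdd (hf.mul hg) (C := Cf * Cg) fun x => ?_
  rw [abs_mul]
  exact mul_le_mul (hCf x) (hCg x) (abs_nonneg _) ((abs_nonneg _).trans (hCf x))

lemma covNonneg_real (q : Measure ℝ) [IsProbabilityMeasure q] : CovNonneg q := by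
  intro f g hf hg ⟨Cf, hCf⟩ ⟨Cg, hCg⟩ mf mg
  have hif : Integrable f q := integrable_of_bdd hf hCf
  have hig : Integrable g q := integrable_of_bdd hg hCg
  have hifg : Integrable (fun x => f x * g x) q := integrable_mul_of_bdd hf hg hCf hCg
  set If := ∫ x, f x ∂q with hIf
  set Ig := ∫ x, g x ∂q with hIg
  set Ifg := ∫ x, f x * g x ∂q with hIfg
  have expand : ∀ (a b : ℝ), (∫ y, ((a - f y) * (b - g y)) ∂q)
      = a * b - a * Ig - b * If + Ifg := by
    intro a b
    have h1 : Integrable (fun y => a * b - a * g y) q :=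
      (integrable_const (a * b)).sub (hig.const_mul a)
    have h2 : Integrable (fun y => a * b - a * g y - b * f y) q :=
      h1.sub (hif.const_mul b)
    have : (fun y => (a - f y) * (b - g y))
        = fun y => (a * b - a * g y - b * f y) + f y * g y := by
      funext y; ring
    rw [this, integral_add h2 hifg, integral_sub h1 (hif.const_mul b),
      integral_sub (integrable_const _) (hig.const_mul a),
      integral_const, integral_const_mul, integral_const_mul]
    simp [← hIf, ← hIg, ← hIfg]
  have key : ∀ x : ℝ, 0 ≤ f x * g x - f x * Ig - g x * If + Ifg := by
    intro x
    have h1 : 0 ≤ ∫ y, (f x - f y) * (g x - g y) ∂q := by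
      refine integral_nonneg fun y => ?_
      rcases le_total x y with h | h
      · have := mul_nonneg (neg_nonneg.2 (sub_nonpos.2 (mf h)))
          (neg_nonneg.2 (sub_nonpos.2 (mg h)))
        rwa [neg_mul_neg] at this
      · exact mul_nonneg (sub_nonneg.2 (mf h)) (sub_nonneg.2 (mg h))
    rw [expand (f x) (g x)] at h1
    linarith
  have h3 : 0 ≤ ∫ x, (f x * g x - f x * Ig - g x * If + Ifg) ∂q :=
    integral_nonneg key
  have h4 : (∫ x, (f x * g x - f x * Ig - g x * If + Ifg) ∂q)
      = Ifg - If * Ig - Ig * If + Ifg := by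
    have h1 : Integrable (fun x => f x * g x - f x * Ig) q :=
      hifg.sub (hif.mul_const Ig)
    have h2 : Integrable (fun x => f x * g x - f x * Ig - g x * If) q :=
      h1.sub (hig.mul_const If)
    rw [integral_add h2 (integrable_const _), integral_sub h1 (hig.mul_const If),
      integral_sub hifg (hif.mul_const Ig), integral_mul_const, integral_mul_const,
      integral_const]
    simp [← hIf, ← hIg, ← hIfg]
  rw [h4] at h3
  linarith


lemma covNonneg_map {β : Type*} [MeasurableSpace β] [Preorder α] [Preorder β]
    {Q : Measure α} (hQ : CovNonneg Q) {φ : α → β} (hφ : Measurable φ)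
    (hm : Monotone φ) : CovNonneg (Q.map φ) := by
  intro f g hf hg bf bg mf mg
  rw [integral_map hφ.aemeasurable hf.aestronglyMeasurable,
    integral_map hφ.aemeasurable hg.aestronglyMeasurable,
    integral_map (f := fun x => f x * g x) hφ.aemeasurable (hf.mul hg).aestronglyMeasurable]
  exact hQ (f ∘ φ) (g ∘ φ) (hf.comp hφ) (hg.comp hφ)
    (bf.imp fun C hC x => hC _) (bg.imp fun C hC x => hC _)
    (mf.comp hm) (mg.comp hm)

lemma covNonneg_prod [Preorder α] (P : Measure ℝ) [IsProbabilityMeasure P]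
    (Q : Measure α) [IsProbabilityMeasure Q] (hQ : CovNonneg Q) :
    CovNonneg (P.prod Q) := by
  intro f g hf hg ⟨Cf, hCf⟩ ⟨Cg, hCg⟩ mf mg
  set F : ℝ → ℝ := fun t => ∫ y, f (t, y) ∂Q with hF
  set G : ℝ → ℝ := fun t => ∫ y, g (t, y) ∂Q with hG
  have hFmeas : Measurable F := hf.stronglyMeasurable.integral_prod_right'.measurable
  have hGmeas : Measurable G := hg.stronglyMeasurable.integral_prod_right'.measurable
  have hFbd : ∀ t, |F t| ≤ |Cf| := by
    intro t
    calc |F t| ≤ ∫ y, |f (t, y)| ∂Q := by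
          simpa [Real.norm_eq_abs] using
            norm_integral_le_integral_norm (fun y => f (t, y))
      _ ≤ ∫ (_ : α), |Cf| ∂Q := by
          refine integral_mono (integrable_of_bdd (hf.comp (measurable_prodMk_left))
            (fun y => hCf (t, y))).abs (integrable_const _) fun y => ?_
          exact (hCf _).trans (le_abs_self _)
      _ = |Cf| := by simp
  have hGbd : ∀ t, |G t| ≤ |Cg| := by
    intro t
    calc |G t| ≤ ∫ y, |g (t, y)| ∂Q := by
          simpa [Real.norm_eq_abs] using
            norm_integral_le_integral_norm (fun y => g (t, y))
      _ ≤ ∫ (_ : α), |Cg| ∂Q := by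
          refine integral_mono (integrable_of_bdd (hg.comp (measurable_prodMk_left))
            (fun y => hCg (t, y))).abs (integrable_const _) fun y => ?_
          exact (hCg _).trans (le_abs_self _)
      _ = |Cg| := by simp
  have hFmono : Monotone F := by
    intro t t' h
    exact integral_mono
      (integrable_of_bdd (hf.comp measurable_prodMk_left) (fun y => hCf _))
      (integrable_of_bdd (hf.comp measurable_prodMk_left) (fun y => hCf _))
      (fun y => mf ⟨h, le_rfl⟩)
  have hGmono : Monotone G := by
    intro t t' h
    exact integral_mono
      (integrable_of_bdd (hg.comp measurable_prodMk_left) (fun y => hCg _))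
      (integrable_of_bdd (hg.comp measurable_prodMk_left) (fun y => hCg _))
      (fun y => mg ⟨h, le_rfl⟩)
  have hfint : Integrable f (P.prod Q) := integrable_of_bdd hf hCf
  have hgint : Integrable g (P.prod Q) := integrable_of_bdd hg hCg
  have hfgint : Integrable (fun z => f z * g z) (P.prod Q) :=
    integrable_mul_of_bdd hf hg hCf hCg
  have e1 : (∫ z, f z ∂(P.prod Q)) = ∫ t, F t ∂P := integral_prod f hfint
  have e2 : (∫ z, g z ∂(P.prod Q)) = ∫ t, G t ∂P := integral_prod g hgint
  have e3 : (∫ z, f z * g z ∂(P.prod Q)) = ∫ t, ∫ y, f (t, y) * g (t, y) ∂Q ∂P :=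
    integral_prod _ hfgint
  rw [e1, e2, e3]
  have inner : ∀ t, F t * G t ≤ ∫ y, f (t, y) * g (t, y) ∂Q := by
    intro t
    exact hQ (fun y => f (t, y)) (fun y => g (t, y))
      (hf.comp measurable_prodMk_left) (hg.comp measurable_prodMk_left)
      ⟨Cf, fun y => hCf _⟩ ⟨Cg, fun y => hCg _⟩
      (fun y y' h => mf ⟨le_rfl, h⟩) (fun y y' h => mg ⟨le_rfl, h⟩)
  have step1 : (∫ t, F t ∂P) * (∫ t, G t ∂P) ≤ ∫ t, F t * G t ∂P :=
    covNonneg_real P F G hFmeas hGmeas ⟨|Cf|, hFbd⟩ ⟨|Cg|, hGbd⟩ hFmono hGmono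
  have step2 : (∫ t, F t * G t ∂P) ≤ ∫ t, ∫ y, f (t, y) * g (t, y) ∂Q ∂P := by
    refine integral_mono (integrable_mul_of_bdd hFmeas hGmeas hFbd hGbd) ?_ inner
    have hmeas : Measurable fun t => ∫ y, f (t, y) * g (t, y) ∂Q :=
      (hf.mul hg).stronglyMeasurable.integral_prod_right'.measurable
    refine integrable_of_bdd hmeas (C := |Cf| * |Cg|) fun t => ?_
    calc |∫ y, f (t, y) * g (t, y) ∂Q| ≤ ∫ y, |f (t, y)| * |g (t, y)| ∂Q := by
          simpa [Real.norm_eq_abs, abs_mul] using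
            norm_integral_le_integral_norm (fun y => f (t, y) * g (t, y))
      _ ≤ ∫ (_ : α), |Cf| * |Cg| ∂Q := by
          have hCf' : ∀ y : α, |(|f (t, y)|)| ≤ |Cf| := fun y => by
            rw [abs_abs]; exact (hCf _).trans (le_abs_self _)
          have hCg' : ∀ y : α, |(|g (t, y)|)| ≤ |Cg| := fun y => by
            rw [abs_abs]; exact (hCg _).trans (le_abs_self _)
          refine integral_mono (integrable_mul_of_bdd
            (hf.comp measurable_prodMk_left).abs (hg.comp measurable_prodMk_left).abs
            hCf' hCg') (integrable_const _) fun y => ?_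
          exact mul_le_mul ((hCf _).trans (le_abs_self _)) ((hCg _).trans (le_abs_self _))
            (abs_nonneg _) (abs_nonneg _)
      _ = |Cf| * |Cg| := by simp
  exact step1.trans step2


lemma covNonneg_pi_fin : ∀ (n : ℕ) (ν : Fin n → Measure ℝ)
    (_ : ∀ i, IsProbabilityMeasure (ν i)), CovNonneg (Measure.pi ν) := by
  intro n
  induction n with
  | zero =>
    intro ν hν f g hf hg bf bg mf mg
    have hfc : ∀ x : Fin 0 → ℝ, f x = f default := fun x => by
      congr 1; exact Subsingleton.elim _ _
    have hgc : ∀ x : Fin 0 → ℝ, g x = g default := fun x => by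
      congr 1; exact Subsingleton.elim _ _
    haveI : IsProbabilityMeasure (Measure.pi ν) := by infer_instance
    simp only [hfc, hgc]
    simp [integral_const]
  | succ n ih =>
    intro ν hν
    haveI : ∀ i, IsProbabilityMeasure (ν i) := hν
    have hmp := (measurePreserving_piFinSuccAbove ν 0).symm
    -- Measure.pi ν = map of the product measure under the symm equiv
    have hmap : Measure.pi ν =
        Measure.map (MeasurableEquiv.piFinSuccAbove (fun _ => ℝ) 0).symm
          (((ν 0)).prod (Measure.pi fun j => ν ((0 : Fin (n+1)).succAbove j))) :=
      hmp.map_eq.symm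
    rw [hmap]
    haveI : IsProbabilityMeasure (Measure.pi fun j => ν ((0 : Fin (n+1)).succAbove j)) := by
      infer_instance
    refine covNonneg_map (covNonneg_prod (ν 0) _ (ih _ fun j => hν _))
      (MeasurableEquiv.piFinSuccAbove (fun _ => ℝ) 0).symm.measurable ?_
    -- monotonicity of (t, y) ↦ Fin.insertNth 0 t y
    intro ⟨t, y⟩ ⟨t', y'⟩ ⟨h1, h2⟩ j
    simp only [MeasurableEquiv.piFinSuccAbove_symm_apply]
    rcases eq_or_ne j 0 with rfl | hj
    · simpa using h1
    · obtain ⟨k, rfl⟩ := Fin.exists_succAbove_eq hj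
      simpa using h2 k

lemma covNonneg_pi {ι : Type*} [Fintype ι] (ν : ι → Measure ℝ)
    [∀ i, IsProbabilityMeasure (ν i)] : CovNonneg (Measure.pi ν) := by
  obtain ⟨e⟩ : Nonempty (Fin (Fintype.card ι) ≃ ι) := ⟨(Fintype.equivFin ι).symm⟩
  have hmp := measurePreserving_piCongrLeft ν e
  rw [← hmp.map_eq]
  refine covNonneg_map (covNonneg_pi_fin _ _ fun i => inferInstance)
    (MeasurableEquiv.piCongrLeft (fun _ => ℝ) e).measurable ?_
  intro x y h j
  have : ∀ (z : Fin (Fintype.card ι) → ℝ) j,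
      (MeasurableEquiv.piCongrLeft (fun _ => ℝ) e) z j = z (e.symm j) := by
    intro z j
    simp [MeasurableEquiv.piCongrLeft, Equiv.piCongrLeft_apply_eq_cast]
  rw [this, this]
  exact h _


end Cov

lemma map_vec_eq_pi {Ω ι : Type*} [MeasurableSpace Ω] [Fintype ι]
    (μ : Measure Ω) [IsProbabilityMeasure μ] (X : ι → Ω → ℝ)
    (hX : ∀ i, Measurable (X i))
    (h : ProbabilityTheory.iIndepFun X μ) :
    μ.map (fun ω i => X i ω) = Measure.pi (fun i => μ.map (X i)) := by
  haveI : ∀ i, IsProbabilityMeasure (μ.map (X i)) :=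
    fun i => Measure.isProbabilityMeasure_map (μ := μ) (hX i).aemeasurable
  refine (Measure.pi_eq (μ := fun i => μ.map (X i)) fun s hs => ?_).symm
  have hV : Measurable (fun ω i => X i ω) := measurable_pi_lambda _ hX
  rw [Measure.map_apply hV (MeasurableSet.univ_pi hs)]
  have hpre : (fun ω i => X i ω) ⁻¹' Set.pi Set.univ s = ⋂ i ∈ Finset.univ, X i ⁻¹' s i := by
    ext ω; simp [Set.mem_pi]
  rw [hpre, ProbabilityTheory.iIndepFun.measure_inter_preimage_eq_mul h Finset.univ
    (fun i _ => hs i)]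
  exact Finset.prod_congr rfl fun i _ => (Measure.map_apply (hX i) (hs i)).symm


lemma measurable_list_sum {ι : Type*} [Fintype ι] (l : List ι) :
    Measurable (fun w : ι → ℝ => (l.map fun e => w e).sum) := by
  induction l with
  | nil => simp [measurable_const]
  | cons a l ih => simp only [List.map_cons, List.sum_cons]; exact (measurable_pi_apply a).add ih

/-- A random vector `X` (with coordinates indexed by `ι`) is positively associated if
`Cov(f(X), g(X)) ≥ 0` for all bounded measurable coordinatewise-nondecreasing
functions `f, g`. -/
def PositivelyAssociated {Ω ι : Type*} [MeasurableSpace Ω]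
    (μ : Measure Ω) (X : Ω → (ι → ℝ)) : Prop :=
  ∀ f g : (ι → ℝ) → ℝ, Measurable f → Measurable g →
    (∃ C, ∀ x, |f x| ≤ C) → (∃ C, ∀ x, |g x| ≤ C) →
    Monotone f → Monotone g →
    0 ≤ (∫ ω, f (X ω) * g (X ω) ∂μ) - (∫ ω, f (X ω) ∂μ) * (∫ ω, g (X ω) ∂μ)

/-- Extremal tree models are extremal associated: if `G` is a tree on `{1, …, d}`,
`(W_e)_{e ∈ E(G)}` are mutually independent real random variables, `E` is a standard
exponential random variable independent of `(W_e)`, and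
`Y_i = E + ∑_{e ∈ ph(ik)} W_e` where `ph(ik)` is the unique path in `G` from `i`
to the fixed vertex `k`, then `Y` is positively associated. -/
theorem tree_model_associated
    {Ω : Type*} [MeasurableSpace Ω] (μ : Measure Ω) [IsProbabilityMeasure μ]
    {d : ℕ} (G : SimpleGraph (Fin d)) (hG : G.IsTree) (k : Fin d)
    (W : Sym2 (Fin d) → Ω → ℝ) (hWmeas : ∀ e, Measurable (W e))
    (hWindep : ProbabilityTheory.iIndepFun
      (fun e : G.edgeSet => W (e : Sym2 (Fin d))) μ)
    (E : Ω → ℝ) (hEmeas : Measurable E)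
    (hEexp : Measure.map E μ = ProbabilityTheory.expMeasure 1)
    (hEindep : ProbabilityTheory.IndepFun E
      (fun ω => fun e : G.edgeSet => W (e : Sym2 (Fin d)) ω) μ)
    (p : ∀ i : Fin d, G.Path i k)
    (Y : Ω → Fin d → ℝ)
    (hY : ∀ ω i, Y ω i = E ω + (((p i : G.Walk i k).edges.map (fun e => W e ω)).sum)) :
    PositivelyAssociated μ Y := by
  classical
  haveI : Fintype ↥G.edgeSet := Fintype.ofFinite _
  set ι := ↥G.edgeSet
  set Wvec : Ω → ι → ℝ := fun ω e => W (e : Sym2 (Fin d)) ω with hWvec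
  have hWvecMeas : Measurable Wvec := measurable_pi_lambda _ fun e => hWmeas _
  set pair : Ω → ℝ × (ι → ℝ) := fun ω => (E ω, Wvec ω) with hpair
  have hpairMeas : Measurable pair := hEmeas.prodMk hWvecMeas
  -- the list of edges (as elements of the edge set) along the path from i to k
  set li : Fin d → List ι := fun i =>
    ((p i : G.Walk i k).edges.attach.map
      (fun e => (⟨e.1, SimpleGraph.Walk.edges_subset_edgeSet _ e.2⟩ : ι))) with hli
  set T : ℝ × (ι → ℝ) → Fin d → ℝ := fun z i => z.1 + ((li i).map z.2).sum with hT
  have hTmeas : Measurable T := by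
    refine measurable_pi_lambda _ fun i => ?_
    exact measurable_fst.add ((measurable_list_sum (li i)).comp measurable_snd)
  have hTmono : Monotone T := by
    rintro ⟨t, w⟩ ⟨t', w'⟩ ⟨h1, h2⟩ i
    exact add_le_add h1 (List.sum_le_sum fun e _ => h2 e)
  have hYeq : Y = fun ω => T (pair ω) := by
    funext ω
    funext i
    rw [hY ω i]
    simp only [hT, hli, hpair]
    congr 1
    rw [List.map_map]
    exact congrArg List.sum
      ((List.attach_map_val (l := (p i : G.Walk i k).edges) (f := fun e => W e ω)).symm)
  have hYmeas : Measurable Y := hYeq ▸ hTmeas.comp hpairMeas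
  -- laws
  haveI : IsProbabilityMeasure (μ.map E) := Measure.isProbabilityMeasure_map hEmeas.aemeasurable
  haveI : ∀ e : ι, IsProbabilityMeasure (μ.map (W (e : Sym2 (Fin d)))) :=
    fun e => Measure.isProbabilityMeasure_map (hWmeas _).aemeasurable
  have hWlaw : μ.map Wvec = Measure.pi (fun e : ι => μ.map (W (e : Sym2 (Fin d)))) :=
    map_vec_eq_pi μ _ (fun e => hWmeas _) hWindep
  have hpairlaw : μ.map pair = (μ.map E).prod (μ.map Wvec) :=
    (ProbabilityTheory.indepFun_iff_map_prod_eq_prod_map_map hEmeas.aemeasurable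
      hWvecMeas.aemeasurable).mp hEindep
  have hYlaw : μ.map Y = ((μ.map E).prod (μ.map Wvec)).map T := by
    rw [← hpairlaw, hYeq, Measure.map_map hTmeas hpairMeas]; rfl
  have hcov : CovNonneg (μ.map Y) := by
    rw [hYlaw, hWlaw]
    haveI : IsProbabilityMeasure
        (Measure.pi (fun e : ι => μ.map (W (e : Sym2 (Fin d))))) := inferInstance
    exact covNonneg_map
      (covNonneg_prod (μ.map E) _ (covNonneg_pi _)) hTmeas hTmono
  intro f g hf hg bf bg mf mg
  rw [sub_nonneg]
  have e1 : (∫ ω, f (Y ω) ∂μ) = ∫ x, f x ∂(μ.map Y) :=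
    (integral_map hYmeas.aemeasurable hf.aestronglyMeasurable).symm
  have e2 : (∫ ω, g (Y ω) ∂μ) = ∫ x, g x ∂(μ.map Y) :=
    (integral_map hYmeas.aemeasurable hg.aestronglyMeasurable).symm
  have e3 : (∫ ω, f (Y ω) * g (Y ω) ∂μ) = ∫ x, f x * g x ∂(μ.map Y) :=
    (integral_map hYmeas.aemeasurable (hf.mul hg).aestronglyMeasurable).symm
  rw [e1, e2, e3]
  exact hcov f g hf hg bf bg mf mg
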